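/- Let 0<q<1, λ>0, μ>0, and z ∈ ℝ with |z| < τ_{λμ,q} = ((2-q)/(2-2q))(2λμ(1-q))^{1/(2-q)}. Then 0 is the unique minimizer of v ↦ (z-v)²/(2μ) + λ|v|^q over ℝ. -/

import Mathlib

/-- If `|z| < τ = ((2-q)/(2-2q))(2λμ(1-q))^(1/(2-q))`, then `0` is the unique
minimizer of `v ↦ (z-v)²/(2μ) + λ|v|^q` over `ℝ`. -/
theorem prox_below_threshold_zero_unique_min (q lam mu z : ℝ) (hq0 : 0 < q) (hq1 : q < 1)
    (hlam : 0 < lam) (hmu : 0 < mu)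
    (hz : |z| < (2 - q) / (2 - 2 * q) * (2 * lam * mu * (1 - q)) ^ ((1 : ℝ) / (2 - q))) :
    ∀ v : ℝ, v ≠ 0 →
      (z - 0) ^ 2 / (2 * mu) + lam * |(0 : ℝ)| ^ q <
        (z - v) ^ 2 / (2 * mu) + lam * |v| ^ q := by
  intro v hv
  have ht : 0 < |v| := abs_pos.mpr hv
  have hB : (0:ℝ) < 2 - q := by linarith
  have hA : (0:ℝ) < 2 - 2*q := by linarith
  have hlm : 0 < lam * mu := mul_pos hlam hmu
  set t := |v| with htdef
  set α : ℝ := (1-q)/(2-q) with hαdef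
  set β : ℝ := 1/(2-q) with hβdef
  have hα : 0 < α := div_pos (by linarith) hB
  have hβ : 0 < β := by positivity
  have hαβ : α + β = 1 := by rw [hαdef, hβdef]; field_simp; ring
  have key : (2 - q) / (2 - 2 * q) * (2 * lam * mu * (1 - q)) ^ β ≤ t/2 + lam*mu*t^(q-1) := by
    have htq1 : (0:ℝ) < t^(q-1) := Real.rpow_pos_of_pos ht _
    have hp₁ : (0:ℝ) ≤ t/(2*α) := by positivity
    have hp₂ : (0:ℝ) ≤ lam*mu*t^(q-1)/β := by positivity
    have amgm := Real.geom_mean_le_arith_mean2_weighted hα.le hβ.le hp₁ hp₂ hαβ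
    have eR : α * (t/(2*α)) + β * (lam*mu*t^(q-1)/β) = t/2 + lam*mu*t^(q-1) := by
      field_simp
    have e0 : 2*α = (2-2*q)/(2-q) := by
      rw [hαdef]; field_simp [hB.ne']
    have e1 : t/(2*α) = t * ((2-q)/(2-2*q)) := by
      rw [e0, div_div_eq_mul_div, mul_div_assoc]
    have e2 : lam*mu*t^(q-1)/β = (lam*mu*t^(q-1)) * (2-q) := by
      rw [hβdef]; field_simp
    have hC : (0:ℝ) < (2-q)/(2-2*q) := div_pos hB hA
    have eL : (t/(2*α))^α * (lam*mu*t^(q-1)/β)^β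
        = (2 - q) / (2 - 2 * q) * (2 * lam * mu * (1 - q)) ^ β := by
      rw [e1, e2,
        Real.mul_rpow ht.le hC.le,
        Real.mul_rpow (by positivity) hB.le,
        Real.mul_rpow hlm.le htq1.le,
        ← Real.rpow_mul ht.le]
      have hbase : 2 * lam * mu * (1 - q) = (lam*mu) * (2-2*q) := by ring
      rw [hbase, Real.mul_rpow hlm.le hA.le,
        Real.div_rpow hB.le hA.le]
      have hexp : α + (q-1)*β = 0 := by
        rw [hαdef, hβdef]; field_simp; ring
      have h1 : (2-q)^α * (2-q)^β = 2-q := by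
        rw [← Real.rpow_add hB, hαβ, Real.rpow_one]
      have h2 : (2-2*q)^α * (2-2*q)^β = 2-2*q := by
        rw [← Real.rpow_add hA, hαβ, Real.rpow_one]
      have ha1 : (0:ℝ) < (2-q)^α := Real.rpow_pos_of_pos hB _
      have ha2 : (0:ℝ) < (2-q)^β := Real.rpow_pos_of_pos hB _
      have ha3 : (0:ℝ) < (2-2*q)^α := Real.rpow_pos_of_pos hA _
      have ha4 : (0:ℝ) < (2-2*q)^β := Real.rpow_pos_of_pos hA _
      -- collapse t powers
      have htzero : t ^ α * t^((q-1)*β) = 1 := by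
        rw [← Real.rpow_add ht, hexp, Real.rpow_zero]
      rw [show t ^ α * ((2-q)^α / (2-2*q)^α) * ((lam*mu)^β * t^((q-1)*β) * (2-q)^β)
          = ((2-q)^α / (2-2*q)^α) * ((lam*mu)^β * (2-q)^β) * (t ^ α * t^((q-1)*β)) by ring,
        htzero, mul_one]
      rw [div_mul_eq_mul_div, div_mul_eq_mul_div, div_eq_div_iff ha3.ne' hA.ne']
      linear_combination ((lam*mu)^β*(2-2*q))*h1 - ((2-q)*(lam*mu)^β)*h2
    calc (2 - q) / (2 - 2 * q) * (2 * lam * mu * (1 - q)) ^ β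
        = (t/(2*α))^α * (lam*mu*t^(q-1)/β)^β := eL.symm
      _ ≤ α * (t/(2*α)) + β * (lam*mu*t^(q-1)/β) := amgm
      _ = t/2 + lam*mu*t^(q-1) := eR
  -- now finish
  have hzt : |z| < t/2 + lam*mu*t^(q-1) := lt_of_lt_of_le hz key
  have h3 : z*v ≤ |z| * t := by
    calc z*v ≤ |z * v| := le_abs_self _
      _ = |z| * t := abs_mul z v
  have htq : t^(q-1)*t = t^q := by
    nth_rewrite 2 [← Real.rpow_one t]
    rw [← Real.rpow_add ht]; ring_nf
  have hv2 : v^2 = t^2 := (sq_abs v).symm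
  have htqpos : (0:ℝ) < t^q := Real.rpow_pos_of_pos ht _
  have h4 : |z| * t < (t/2 + lam*mu*t^(q-1))*t :=
    mul_lt_mul_of_pos_right hzt ht
  have goal2 : z^2 < (z-v)^2 + 2*mu*(lam*t^q) := by nlinarith [h3, h4, hv2, htq]
  have h2mu : (0:ℝ) < 2*mu := by linarith
  have : (z-0)^2 / (2*mu) + lam * |(0:ℝ)|^q = z^2/(2*mu) := by
    rw [abs_zero, Real.zero_rpow (ne_of_gt hq0)]; ring
  rw [this]
  calc z^2/(2*mu) < ((z-v)^2 + 2*mu*(lam*t^q))/(2*mu) :=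
        (div_lt_div_iff_of_pos_right h2mu).mpr goal2
    _ = (z-v)^2/(2*mu) + lam*t^q := by field_simp
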